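/- Over any field, for a 2n×2n matrix A of the symmetric block form [[0,B],[Bᵀ,0]], the polynomial identity per(A + t·I_{2n}) = Σ_{k=0}^{2n} c_k t^{2n-k} holds, where c_k is the sum of the permanents of all k×k central (principal) minors of A. Moreover every nonzero permanent of a central minor of A equals per(M)² for some square submatrix M of B. -/

import Mathlib

/-- The permanent of the principal (central) minor of `A` on the index set
`S`: the sum over bijections `e : S ≃ S` of `∏_{i ∈ S} A i (e i)`
(`S = ∅` contributes `1`; `S = univ` gives the full permanent). -/
noncomputable def principalMinorPermanent {α : Type*} [Fintype α] [DecidableEq α]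
    {R : Type*} [CommRing R] (A : Matrix α α R) (S : Finset α) : R :=
  ∑ e : (↥S ≃ ↥S), ∏ i : ↥S, A i.1 (e i).1

section PermAux
open Finset Equiv Sum

noncomputable def mper {α : Type*} [Fintype α] [DecidableEq α] {R : Type*} [CommRing R]
    (M : Matrix α α R) : R :=
  ∑ σ : Equiv.Perm α, ∏ i, M i (σ i)

variable {α β : Type*} [Fintype α] [DecidableEq α] [Fintype β] [DecidableEq β]
  {R : Type*} [CommRing R]

lemma pmp_univ (M : Matrix α α R) :
    principalMinorPermanent M Finset.univ = mper M := by
  unfold principalMinorPermanent mper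
  refine Fintype.sum_equiv
    (Equiv.permCongr (Equiv.subtypeUnivEquiv (fun x => Finset.mem_univ x))) _ _ ?_
  intro e
  refine Fintype.prod_equiv
    (Equiv.subtypeUnivEquiv (fun x => Finset.mem_univ x))
    (fun i => M i.1 (e i).1)
    (fun i => M i ((Equiv.permCongr (Equiv.subtypeUnivEquiv (fun x => Finset.mem_univ x)) e) i)) ?_
  intro i
  simp [Equiv.permCongr, Equiv.subtypeUnivEquiv]

lemma mper_submatrix_equiv {β' : Type*} [Fintype β'] [DecidableEq β'] (e : β' ≃ α) (M : Matrix α α R) :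
    mper (M.submatrix e e) = mper M := by
  unfold mper
  refine Fintype.sum_equiv (Equiv.permCongr e) _ _ ?_
  intro σ'
  rw [← Equiv.prod_comp e (fun i => M i ((Equiv.permCongr e σ') i))]
  simp [Matrix.submatrix, Equiv.permCongr]

lemma pmp_map {R' : Type*} [CommRing R'] (f : R →+* R') (A : Matrix α α R) (S : Finset α) :
    principalMinorPermanent (A.map f) S = f (principalMinorPermanent A S) := by
  unfold principalMinorPermanent
  rw [map_sum]
  exact Finset.sum_congr rfl fun e _ => by rw [map_prod]; rfl

lemma sum_perm_fixing (A : Matrix α α R) (S : Finset α) :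
    ∑ σ ∈ Finset.univ.filter (fun σ : Equiv.Perm α => ∀ a, a ∉ S → σ a = a),
      ∏ i ∈ S, A i (σ i) = principalMinorPermanent A S := by
  classical
  rw [Finset.sum_subtype (Finset.univ.filter _)
    (p := fun σ : Equiv.Perm α => ∀ a, ¬ a ∈ S → σ a = a)
    (fun σ => by simp) (fun σ => ∏ i ∈ S, A i (σ i))]
  unfold principalMinorPermanent
  refine (Fintype.sum_equiv (Equiv.Perm.subtypeEquivSubtypePerm (fun a => a ∈ S))
    (fun e : Equiv.Perm ↥S => ∏ i : ↥S, A i.1 (e i).1)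
    (fun σ => ∏ i ∈ S, A i (σ.1 i)) ?_).symm
  intro e
  show _ = ∏ i ∈ S, A i (((Equiv.Perm.subtypeEquivSubtypePerm (fun a => a ∈ S)) e).1 i)
  rw [← Finset.prod_attach S (fun i => A i (((Equiv.Perm.subtypeEquivSubtypePerm
    (fun a => a ∈ S)) e).1 i))]
  refine Finset.prod_congr rfl fun i _ => ?_
  congr 1
  exact (Equiv.Perm.ofSubtype_apply_of_mem e i.2).symm


lemma mper_add_smul_one (A : Matrix α α R) (t : R) :
    mper (A + t • (1 : Matrix α α R)) =
      ∑ S : Finset α,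
        principalMinorPermanent A S * t ^ (Fintype.card α - S.card) := by
  classical
  unfold mper
  have hentry : ∀ (σ : Equiv.Perm α) (i : α),
      (A + t • (1 : Matrix α α R)) i (σ i)
        = A i (σ i) + t * (if i = σ i then 1 else 0) := by
    intro σ i
    simp [Matrix.add_apply, Matrix.one_apply]
  calc
    ∑ σ : Equiv.Perm α, ∏ i, (A + t • (1 : Matrix α α R)) i (σ i)
        = ∑ σ : Equiv.Perm α, ∑ S ∈ (Finset.univ : Finset α).powerset,
            (∏ i ∈ S, A i (σ i)) *
              ∏ i ∈ Finset.univ \ S, (t * (if i = σ i then 1 else 0)) := by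
          refine Finset.sum_congr rfl fun σ _ => ?_
          simp_rw [hentry σ]
          exact Finset.prod_add _ _ _
    _ = ∑ S : Finset α, ∑ σ : Equiv.Perm α,
            (∏ i ∈ S, A i (σ i)) *
              ∏ i ∈ Finset.univ \ S, (t * (if i = σ i then 1 else 0)) := by
          rw [Finset.sum_comm]
          rw [Finset.powerset_univ]
    _ = ∑ S : Finset α,
          principalMinorPermanent A S * t ^ (Fintype.card α - S.card) := by
          refine Finset.sum_congr rfl fun S _ => ?_
          have hS : ∀ σ : Equiv.Perm α,
              ∏ i ∈ Finset.univ \ S, (t * (if i = σ i then 1 else 0))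
                = t ^ (Fintype.card α - S.card) *
                    (if ∀ a, ¬ a ∈ S → σ a = a then 1 else 0) := by
            intro σ
            rw [Finset.prod_mul_distrib, Finset.prod_const, Finset.prod_boole]
            have hc : (Finset.univ \ S).card = Fintype.card α - S.card := by
              rw [← Finset.compl_eq_univ_sdiff, Finset.card_compl]
            rw [hc]
            congr 1
            simp only [Finset.mem_sdiff, Finset.mem_univ, true_and, eq_comm]
          simp_rw [hS]
          have hre : ∀ σ : Equiv.Perm α,
              (∏ i ∈ S, A i (σ i)) * (t ^ (Fintype.card α - S.card) *
                  (if ∀ a, ¬ a ∈ S → σ a = a then 1 else 0))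
                = t ^ (Fintype.card α - S.card) *
                  ((∏ i ∈ S, A i (σ i)) * (if ∀ a, ¬ a ∈ S → σ a = a then 1 else 0)) :=
            fun σ => by ring
          simp_rw [hre, ← Finset.mul_sum]
          rw [mul_comm]
          congr 1
          rw [← sum_perm_fixing A S, Finset.sum_filter]
          exact Finset.sum_congr rfl fun σ _ => by
            by_cases h : ∀ a, ¬ a ∈ S → σ a = a <;> simp [h]

lemma mper_fromBlocks (C : Matrix α β R) :
    mper (Matrix.fromBlocks 0 C C.transpose 0) =
      (∑ e : α ≃ β, ∏ a, C a (e a)) ^ 2 := by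
  classical
  unfold mper
  set M : Matrix (α ⊕ β) (α ⊕ β) R := Matrix.fromBlocks 0 C C.transpose 0 with hM
  set P : Equiv.Perm (α ⊕ β) → Prop :=
    fun σ => (∀ a, (σ (inl a)).isRight) ∧ (∀ b, (σ (inr b)).isLeft) with hP
  set Φ : (α ≃ β) × (β ≃ α) → Equiv.Perm (α ⊕ β) :=
    fun p => (Equiv.sumCongr p.1 p.2).trans (Equiv.sumComm β α) with hΦdef
  have hΦl : ∀ p a, Φ p (inl a) = inr (p.1 a) := fun p a => rfl
  have hΦr : ∀ p b, Φ p (inr b) = inl (p.2 b) := fun p b => rfl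
  have hzero : ∀ σ ∈ (Finset.univ : Finset (Equiv.Perm (α ⊕ β))),
      (∏ x, M x (σ x)) ≠ 0 → P σ := by
    intro σ _ hne
    by_contra hp
    apply hne
    rcases not_and_or.mp hp with h | h
    · push_neg at h
      obtain ⟨a, ha⟩ := h
      rcases hx : σ (inl a) with a' | b'
      · refine Finset.prod_eq_zero (Finset.mem_univ (inl a)) ?_
        rw [hx]
        simp [hM]
      · rw [hx] at ha; simp at ha
    · push_neg at h
      obtain ⟨b, hb⟩ := h
      rcases hx : σ (inr b) with a' | b'
      · rw [hx] at hb; simp at hb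
      · refine Finset.prod_eq_zero (Finset.mem_univ (inr b)) ?_
        rw [hx]
        simp [hM]
  rw [← Finset.sum_filter_of_ne hzero]
  have hmain : ∑ σ ∈ Finset.univ.filter P, ∏ x, M x (σ x)
      = ∑ p : (α ≃ β) × (β ≃ α), ∏ x, M x (Φ p x) := by
    symm
    refine Finset.sum_bij' (i := fun p _ => Φ p)
      (j := fun σ hσ => ?_) ?_ ?_ ?_ ?_ ?_
    · -- construct the pair from σ
      have hσ' : P σ := (Finset.mem_filter.mp hσ).2
      refine ⟨Equiv.ofBijective (fun a => (σ (inl a)).getRight (hσ'.1 a)) ⟨?_, ?_⟩,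
              Equiv.ofBijective (fun b => (σ (inr b)).getLeft (hσ'.2 b)) ⟨?_, ?_⟩⟩
      · intro a a' h
        have h2 : σ (inl a) = σ (inl a') := by
          rw [← Sum.inr_getRight (σ (inl a)) (hσ'.1 a),
            ← Sum.inr_getRight (σ (inl a')) (hσ'.1 a')]
          exact congrArg inr h
        simpa using σ.injective h2
      · intro b
        cases h : σ.symm (inr b) with
        | inl a =>
          refine ⟨a, ?_⟩
          have h2 : σ (inl a) = inr b := by rw [← h]; simp
          obtain ⟨hh, he⟩ := Sum.eq_right_iff_getRight_eq.mp h2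
          exact he
        | inr b' =>
          exfalso
          have h2 : σ (inr b') = inr b := by rw [← h]; simp
          have := hσ'.2 b'
          rw [h2] at this
          simp at this
      · intro b b' h
        have h2 : σ (inr b) = σ (inr b') := by
          rw [← Sum.inl_getLeft (σ (inr b)) (hσ'.2 b),
            ← Sum.inl_getLeft (σ (inr b')) (hσ'.2 b')]
          exact congrArg inl h
        simpa using σ.injective h2
      · intro a
        cases h : σ.symm (inl a) with
        | inr b =>
          refine ⟨b, ?_⟩
          have h2 : σ (inr b) = inl a := by rw [← h]; simp
          obtain ⟨hh, he⟩ := Sum.eq_left_iff_getLeft_eq.mp h2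
          exact he
        | inl a' =>
          exfalso
          have h2 : σ (inl a') = inl a := by rw [← h]; simp
          have := hσ'.1 a'
          rw [h2] at this
          simp at this
    · intro p _
      refine Finset.mem_filter.mpr ⟨Finset.mem_univ _, ?_, ?_⟩
      · intro a; rw [hΦl]; simp
      · intro b; rw [hΦr]; simp
    · intro σ hσ; exact Finset.mem_univ _
    · intro p _
      ext : 1
      · ext a
        obtain ⟨h, he⟩ := Sum.eq_right_iff_getRight_eq.mp (hΦl p a)
        exact he
      · ext b
        obtain ⟨h, he⟩ := Sum.eq_left_iff_getLeft_eq.mp (hΦr p b)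
        exact he
    · intro σ hσ
      have hσ' : P σ := (Finset.mem_filter.mp hσ).2
      ext x
      cases x with
      | inl a =>
        rw [hΦl]
        simp only [Equiv.ofBijective_apply]
        exact Sum.inr_getRight _ _
      | inr b =>
        rw [hΦr]
        simp only [Equiv.ofBijective_apply]
        exact Sum.inl_getLeft _ _
    · intro p _; rfl
  rw [hmain]
  have hsplit : ∀ p : (α ≃ β) × (β ≃ α),
      ∏ x, M x (Φ p x) = (∏ a, C a (p.1 a)) * ∏ b, C (p.2 b) b := by
    intro p
    rw [Fintype.prod_sum_type]
    have h1 : ∏ a, M (inl a) (Φ p (inl a)) = ∏ a, C a (p.1 a) :=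
      Finset.prod_congr rfl fun a _ => by rw [hΦl]; simp [hM]
    have h2 : ∏ b, M (inr b) (Φ p (inr b)) = ∏ b, C (p.2 b) b :=
      Finset.prod_congr rfl fun b _ => by rw [hΦr]; simp [hM]
    rw [h1, h2]
  simp_rw [hsplit]
  have hswap : ∑ g : β ≃ α, ∏ b, C (g b) b = ∑ f : α ≃ β, ∏ a, C a (f a) := by
    refine (Fintype.sum_equiv ⟨Equiv.symm, Equiv.symm, fun _ => Equiv.symm_symm _,
      fun _ => Equiv.symm_symm _⟩ (fun f => ∏ a, C a (f a))
      (fun g => ∏ b, C (g b) b) ?_).symm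
    intro f
    show ∏ a, C a (f a) = ∏ b, C (f.symm b) b
    rw [← Equiv.prod_comp f (fun b => C (f.symm b) b)]
    simp
  have hprod : ∑ p : (α ≃ β) × (β ≃ α), (∏ a, C a (p.1 a)) * ∏ b, C (p.2 b) b
      = (∑ f : α ≃ β, ∏ a, C a (f a)) * ∑ g : β ≃ α, ∏ b, C (g b) b := by
    rw [Fintype.sum_mul_sum]
    exact Fintype.sum_prod_type _
  rw [hprod, hswap, sq]

end PermAux

/-- Over any field, for the `2n × 2n` symmetric block matrix
`A = [[0,B],[Bᵀ,0]]`, the polynomial identity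
`per(A + t·I) = ∑_{k=0}^{2n} c_k t^{2n-k}` holds, where `c_k` is the sum of
the permanents of all `k × k` central minors of `A`; moreover every nonzero
permanent of a central minor of `A` equals `per(M)²` for some square
submatrix `M = B[I,J]` of `B`. -/
theorem permanent_add_scalar_expansion {k : Type*} [Field k] {n : ℕ}
    (B : Matrix (Fin n) (Fin n) k) :
    (principalMinorPermanent
        ((Matrix.fromBlocks 0 B B.transpose 0).map Polynomial.C
          + (Polynomial.X : Polynomial k) • (1 : Matrix (Fin n ⊕ Fin n) (Fin n ⊕ Fin n) (Polynomial k)))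
        Finset.univ =
      ∑ j ∈ Finset.range (2 * n + 1),
        Polynomial.C (∑ S ∈ Finset.univ.filter
            (fun S : Finset (Fin n ⊕ Fin n) => S.card = j),
          principalMinorPermanent (Matrix.fromBlocks 0 B B.transpose 0) S)
          * Polynomial.X ^ (2 * n - j)) ∧
    (∀ S : Finset (Fin n ⊕ Fin n),
      principalMinorPermanent (Matrix.fromBlocks 0 B B.transpose 0) S ≠ 0 →
      ∃ I J : Finset (Fin n), I.card = J.card ∧
        principalMinorPermanent (Matrix.fromBlocks 0 B B.transpose 0) S =
          (∑ e : (↥I ≃ ↥J), ∏ i : ↥I, B i.1 (e i).1) ^ 2) := by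
  classical
  set A : Matrix (Fin n ⊕ Fin n) (Fin n ⊕ Fin n) k :=
    Matrix.fromBlocks 0 B B.transpose 0 with hA
  constructor
  · rw [pmp_univ, mper_add_smul_one]
    have hc : Fintype.card (Fin n ⊕ Fin n) = 2 * n := by simp [two_mul]
    rw [← Finset.sum_fiberwise_of_maps_to (g := Finset.card)
      (t := Finset.range (2 * n + 1))
      (fun S _ => Finset.mem_range.mpr (by
        have h' := Finset.card_le_univ S
        rw [hc] at h'
        omega))]
    refine Finset.sum_congr rfl fun j hj => ?_
    rw [map_sum, Finset.sum_mul]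
    refine Finset.sum_congr rfl fun S hS => ?_
    have hj' : S.card = j := by
      have := Finset.mem_filter.mp hS
      exact this.2
    rw [pmp_map, hc, hj']
  · intro S hS
    -- decompose S
    set ψ : ({a : Fin n // Sum.inl a ∈ S} ⊕ {b : Fin n // Sum.inr b ∈ S}) ≃ ↥S :=
      (Equiv.subtypeSum (p := fun c => c ∈ S)).symm with hψ
    set B' : Matrix {a : Fin n // Sum.inl a ∈ S} {b : Fin n // Sum.inr b ∈ S} k :=
      B.submatrix Subtype.val Subtype.val with hB'
    have h1 : principalMinorPermanent A S
        = mper ((A.submatrix (Subtype.val : ↥S → _) Subtype.val)) := rfl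
    have h2 : (A.submatrix (Subtype.val : ↥S → _) Subtype.val).submatrix ψ ψ
        = Matrix.fromBlocks 0 B' B'.transpose 0 := by
      ext x y
      rcases x with x | x <;> rcases y with y | y <;> rfl
    have h3 : principalMinorPermanent A S
        = (∑ e : ({a : Fin n // Sum.inl a ∈ S} ≃ {b : Fin n // Sum.inr b ∈ S}),
            ∏ a, B' a (e a)) ^ 2 := by
      rw [h1, ← mper_submatrix_equiv ψ, h2, mper_fromBlocks]
    -- transfer to toLeft/toRight
    set eI : {a : Fin n // Sum.inl a ∈ S} ≃ ↥S.toLeft :=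
      Equiv.subtypeEquivRight (fun a => by simp) with heI
    set eJ : {b : Fin n // Sum.inr b ∈ S} ≃ ↥S.toRight :=
      Equiv.subtypeEquivRight (fun b => by simp) with heJ
    have h4 : (∑ e : ({a : Fin n // Sum.inl a ∈ S} ≃ {b : Fin n // Sum.inr b ∈ S}),
            ∏ a, B' a (e a))
        = ∑ e : (↥S.toLeft ≃ ↥S.toRight), ∏ i : ↥S.toLeft, B i.1 (e i).1 := by
      refine Fintype.sum_equiv (Equiv.equivCongr eI eJ) _ _ ?_
      intro e
      refine Fintype.prod_equiv eI _ _ ?_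
      intro a
      simp [hB', heI, heJ, Equiv.subtypeEquivRight, Matrix.submatrix]
      rfl
    refine ⟨S.toLeft, S.toRight, ?_, ?_⟩
    · -- cards are equal
      rw [h3] at hS
      have hs0 : (∑ e : ({a : Fin n // Sum.inl a ∈ S} ≃ {b : Fin n // Sum.inr b ∈ S}),
          ∏ a, B' a (e a)) ≠ 0 := fun h => hS (by rw [h]; ring)
      have hne : Nonempty ({a : Fin n // Sum.inl a ∈ S} ≃ {b : Fin n // Sum.inr b ∈ S}) := by
        by_contra h
        rw [not_nonempty_iff] at h
        exact hs0 (by simp)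
      have hcard := Fintype.card_eq.mpr hne
      rw [Fintype.card_congr eI, Fintype.card_congr eJ, Fintype.card_coe,
        Fintype.card_coe] at hcard
      exact hcard
    · rw [h3, h4]
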